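/- For all natural numbers m, n, k, the number of subsets S of the disjoint union X = Y ⊔ (X_1 ⊔ ... ⊔ X_n), where |Y| = m and each block X_j has size 2, such that |S| = n + k and S intersects every block X_j (j = 1,...,n), equals C(m,n,k). Formally: the number of subsets S of Fin m ⊕ (Fin n × Fin 2) with |S| = n + k such that for every j : Fin n there exists b : Fin 2 with inr (j,b) ∈ S, equals C(m,n,k). -/

import Mathlib

open Finset

/-- The set of ternary words of length `m + n` (as functions `Fin (m+n) → Fin 3`)
having exactly `k` letters equal to `2` and no letter equal to `0` among the
first `m` letters. -/
def ternaryWords (m n k : ℕ) : Finset (Fin (m + n) → Fin 3) :=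
  univ.filter fun w =>
    (univ.filter fun i => w i = 2).card = k ∧ ∀ i : Fin (m + n), (i : ℕ) < m → w i ≠ 0

/-- `C m n k` is the number of ternary words of length `m + n` with exactly `k`
twos and no zero among the first `m` letters; it equals the inset number
`{m,n choose k}` of Janjić–Petković. -/
def C (m n k : ℕ) : ℕ := (ternaryWords m n k).card

variable {m n : ℕ}

def enc (S : Finset (Fin m ⊕ Fin n × Fin 2)) : Fin (m + n) → Fin 3 :=
  Fin.addCases (fun i => if Sum.inl i ∈ S then 2 else 1)
    (fun j => if Sum.inr (j, 0) ∈ S then (if Sum.inr (j, 1) ∈ S then 2 else 0) else 1)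

def decP (w : Fin (m + n) → Fin 3) : Fin m ⊕ Fin n × Fin 2 → Prop :=
  Sum.elim (fun i => w (Fin.castAdd n i) = 2)
    (fun p => (p.2 = 0 ∧ w (Fin.natAdd m p.1) ≠ 1) ∨ (p.2 = 1 ∧ w (Fin.natAdd m p.1) ≠ 0))

instance (w : Fin (m + n) → Fin 3) : DecidablePred (decP w) := fun x => by
  cases x <;> dsimp [decP] <;> infer_instance

def dec (w : Fin (m + n) → Fin 3) : Finset (Fin m ⊕ Fin n × Fin 2) :=
  univ.filter (decP w)

lemma mem_dec_inr (w : Fin (m + n) → Fin 3) (j : Fin n) (b : Fin 2) :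
    Sum.inr (j, b) ∈ dec w ↔
      ((b = 0 ∧ w (Fin.natAdd m j) ≠ 1) ∨ (b = 1 ∧ w (Fin.natAdd m j) ≠ 0)) := by
  rw [dec, Finset.mem_filter]; simp [decP]

lemma mem_dec_inl (w : Fin (m + n) → Fin 3) (i : Fin m) :
    Sum.inl i ∈ dec w ↔ w (Fin.castAdd n i) = 2 := by
  rw [dec, Finset.mem_filter]; simp [decP]

lemma enc_left (S : Finset (Fin m ⊕ Fin n × Fin 2)) (i : Fin m) :
    enc S (Fin.castAdd n i) = if Sum.inl i ∈ S then 2 else 1 := by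
  simp [enc]

lemma enc_right (S : Finset (Fin m ⊕ Fin n × Fin 2)) (j : Fin n) :
    enc S (Fin.natAdd m j) =
      if Sum.inr (j, 0) ∈ S then (if Sum.inr (j, 1) ∈ S then 2 else 0) else 1 := by
  simp [enc]

lemma dec_enc (S : Finset (Fin m ⊕ Fin n × Fin 2))
    (h : ∀ j : Fin n, ∃ b : Fin 2, Sum.inr (j, b) ∈ S) : dec (enc S) = S := by
  ext x
  cases x with
  | inl i =>
    rw [mem_dec_inl, enc_left]
    split <;> simp_all
  | inr p =>
    obtain ⟨j, b⟩ := p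
    rw [mem_dec_inr, enc_right]
    obtain ⟨b', hb'⟩ := h j
    fin_cases b <;> fin_cases b' <;>
      by_cases h0 : Sum.inr (j, (0 : Fin 2)) ∈ S <;>
      by_cases h1 : Sum.inr (j, (1 : Fin 2)) ∈ S <;>
      simp_all

lemma enc_dec (w : Fin (m + n) → Fin 3)
    (hw : ∀ i : Fin (m + n), (i : ℕ) < m → w i ≠ 0) : enc (dec w) = w := by
  funext x
  refine Fin.addCases (fun i => ?_) (fun j => ?_) x
  · rw [enc_left]
    simp only [mem_dec_inl]
    have h0 : w (Fin.castAdd n i) ≠ 0 := hw _ (by simp)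
    revert h0
    generalize w (Fin.castAdd n i) = v
    revert v; decide
  · rw [enc_right]
    simp only [mem_dec_inr]
    simp only [show ((0:Fin 2) = 0) = True by simp, show ((0:Fin 2) = 1) = False by simp,
      show ((1:Fin 2) = 0) = False by simp, show ((1:Fin 2) = 1) = True by simp,
      true_and, false_and, or_false, false_or]
    generalize w (Fin.natAdd m j) = v
    revert v; decide

lemma card_split (S : Finset (Fin m ⊕ Fin n × Fin 2)) :
    S.card = (∑ i : Fin m, if Sum.inl i ∈ S then 1 else 0) +
      ∑ j : Fin n, ((if Sum.inr (j, 0) ∈ S then 1 else 0) +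
        (if Sum.inr (j, 1) ∈ S then 1 else 0)) := by
  rw [← Finset.filter_univ_mem S, Finset.card_filter]
  rw [Fintype.sum_sum_type, Fintype.sum_prod_type]
  simp only [Fin.sum_univ_two]
  simp

lemma twos_split (w : Fin (m + n) → Fin 3) :
    (univ.filter fun i => w i = 2).card =
      (∑ i : Fin m, if w (Fin.castAdd n i) = 2 then 1 else 0) +
      ∑ j : Fin n, if w (Fin.natAdd m j) = 2 then 1 else 0 := by
  rw [Finset.card_filter, Fin.sum_univ_add]

lemma twos_enc {k : ℕ} (S : Finset (Fin m ⊕ Fin n × Fin 2))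
    (h : ∀ j : Fin n, ∃ b : Fin 2, Sum.inr (j, b) ∈ S) (hc : S.card = n + k) :
    (univ.filter fun i => enc S i = 2).card = k := by
  have hblock : ∀ j : Fin n,
      ((if Sum.inr (j, 0) ∈ S then 1 else 0) + (if Sum.inr (j, 1) ∈ S then (1:ℕ) else 0)) =
        1 + (if Sum.inr (j, 0) ∈ S ∧ Sum.inr (j, 1) ∈ S then 1 else 0) := by
    intro j; obtain ⟨b, hb⟩ := h j
    fin_cases b <;> by_cases h0 : Sum.inr (j, (0 : Fin 2)) ∈ S <;>
      by_cases h1 : Sum.inr (j, (1 : Fin 2)) ∈ S <;> simp_all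
  have hc' := card_split S
  rw [Finset.sum_congr rfl (fun j _ => hblock j), Finset.sum_add_distrib] at hc'
  simp only [Finset.sum_const, card_univ, Fintype.card_fin, smul_eq_mul, mul_one] at hc'
  rw [twos_split]
  have e1 : ∑ i : Fin m, (if enc S (Fin.castAdd n i) = 2 then (1:ℕ) else 0) =
      ∑ i : Fin m, if Sum.inl i ∈ S then 1 else 0 := by
    refine Finset.sum_congr rfl fun i _ => ?_
    rw [enc_left]; split <;> simp
  have e2 : ∑ j : Fin n, (if enc S (Fin.natAdd m j) = 2 then (1:ℕ) else 0) =
      ∑ j : Fin n, if Sum.inr (j, 0) ∈ S ∧ Sum.inr (j, 1) ∈ S then 1 else 0 := by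
    refine Finset.sum_congr rfl fun j _ => ?_
    rw [enc_right]
    by_cases h0 : Sum.inr (j, (0 : Fin 2)) ∈ S <;>
      by_cases h1 : Sum.inr (j, (1 : Fin 2)) ∈ S <;> simp [h0, h1]
  rw [e1, e2]
  omega

lemma card_dec {k : ℕ} (w : Fin (m + n) → Fin 3)
    (hw : (univ.filter fun i => w i = 2).card = k) : (dec w).card = n + k := by
  rw [twos_split] at hw
  rw [card_split]
  have e1 : ∀ i : Fin m, (if Sum.inl i ∈ dec w then (1:ℕ) else 0) =
      if w (Fin.castAdd n i) = 2 then 1 else 0 := by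
    intro i; simp [mem_dec_inl]
  have e2 : ∀ j : Fin n,
      ((if Sum.inr (j, 0) ∈ dec w then (1:ℕ) else 0) +
        (if Sum.inr (j, 1) ∈ dec w then 1 else 0)) =
      1 + (if w (Fin.natAdd m j) = 2 then 1 else 0) := by
    intro j
    simp only [mem_dec_inr]
    simp only [show ((0:Fin 2) = 0) = True by simp, show ((0:Fin 2) = 1) = False by simp,
      show ((1:Fin 2) = 0) = False by simp, show ((1:Fin 2) = 1) = True by simp,
      true_and, false_and, or_false, false_or]
    generalize w (Fin.natAdd m j) = v
    revert v; decide
  rw [Finset.sum_congr rfl fun i _ => e1 i, Finset.sum_congr rfl fun j _ => e2 j,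
    Finset.sum_add_distrib]
  simp only [Finset.sum_const, card_univ, Fintype.card_fin, smul_eq_mul, mul_one]
  omega

theorem stmt_0 (m n k : ℕ) :
    ((univ : Finset (Finset (Fin m ⊕ Fin n × Fin 2))).filter fun S =>
        S.card = n + k ∧ ∀ j : Fin n, ∃ b : Fin 2, Sum.inr (j, b) ∈ S).card
      = C m n k := by
  rw [C, ternaryWords]
  refine Finset.card_nbij' enc dec ?_ ?_ ?_ ?_
  · intro S hS
    simp only [mem_coe, mem_filter, mem_univ, true_and] at hS ⊢
    refine ⟨twos_enc S hS.2 hS.1, fun i hi => ?_⟩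
    have hieq : i = Fin.castAdd n ⟨(i : ℕ), hi⟩ := by ext; simp
    rw [hieq, enc_left]
    split <;> simp
  · intro w hw
    simp only [mem_coe, mem_filter, mem_univ, true_and] at hw ⊢
    refine ⟨card_dec w hw.1, fun j => ?_⟩
    by_cases hv : w (Fin.natAdd m j) = 1
    · exact ⟨1, by rw [mem_dec_inr]; right; exact ⟨rfl, by rw [hv]; decide⟩⟩
    · exact ⟨0, by rw [mem_dec_inr]; left; exact ⟨rfl, hv⟩⟩
  · intro S hS
    exact dec_enc S (mem_filter.mp hS).2.2
  · intro w hw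
    exact enc_dec w (mem_filter.mp hw).2.2
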